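/- Let G be an FC group and let N be a normal subgroup of finite index in G. Then the quotient G'/N' of the commutator subgroup G' by the commutator subgroup N' of N is finitely generated (as a group), where N' is normal in G. -/

import Mathlib

open scoped commutatorElement

section Aux

variable {H : Type*} [Group H]

/-- Commutators are unchanged by central perturbation of the left argument. -/
lemma comm_central_left {z : H} (hz : z ∈ Subgroup.center H) (a b : H) :
    ⁅a * z, b⁆ = ⁅a, b⁆ := by
  have hz' := Subgroup.mem_center_iff.mp hz
  have h1 : (MulAut.conj (a * z)) b = (MulAut.conj a) b := by
    rw [map_mul, MulAut.mul_apply]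
    congr 1
    rw [MulAut.conj_apply, ← hz' b, mul_inv_cancel_right]
  rw [commutatorElement_def, commutatorElement_def, ← MulAut.conj_apply, ← MulAut.conj_apply, h1]

lemma comm_central {z w : H} (hz : z ∈ Subgroup.center H) (hw : w ∈ Subgroup.center H)
    (a b : H) : ⁅a * z, b * w⁆ = ⁅a, b⁆ := by
  rw [comm_central_left hz, ← commutatorElement_inv, comm_central_left hw,
    commutatorElement_inv]

/-- In an FC group, the centralizer of a single element has finite index. -/
lemma centralizer_finiteIndex_of_FC
    (hFC : ∀ x : H, (Set.range fun h : H => h * x * h⁻¹).Finite) (y : H) :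
    (Subgroup.centralizer {y}).FiniteIndex := by
  rw [Subgroup.centralizer_eq_comap_stabilizer]
  constructor
  have hidx := Subgroup.index_comap_of_surjective (H := MulAction.stabilizer (ConjAct H) y)
    (f := (ConjAct.toConjAct : H ≃* ConjAct H).toMonoidHom) (MulEquiv.surjective ConjAct.toConjAct)
  rw [MulAction.index_stabilizer] at hidx
  refine hidx.trans_ne ?_
  have horb : MulAction.orbit (ConjAct H) y = Set.range fun h : H => h * y * h⁻¹ := by
    ext w
    constructor
    · rintro ⟨g, rfl⟩
      exact ⟨ConjAct.ofConjAct g, rfl⟩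
    · rintro ⟨h, rfl⟩
      exact ⟨ConjAct.toConjAct h, rfl⟩
  rw [horb]
  have hfin : (Set.range fun h : H => h * y * h⁻¹).Finite := hFC y
  have hne : (Set.range fun h : H => h * y * h⁻¹).Nonempty := ⟨1 * y * 1⁻¹, 1, rfl⟩
  exact ((Set.ncard_pos hfin).mpr hne).ne'

/-- If an FC group has an abelian subgroup of finite index, its center has finite index. -/
lemma center_finiteIndex_aux
    (hFC : ∀ x : H, (Set.range fun h : H => h * x * h⁻¹).Finite)
    (A : Subgroup H) [A.FiniteIndex]
    (hcomm : ∀ a ∈ A, ∀ b ∈ A, a * b = b * a) :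
    (Subgroup.center H).FiniteIndex := by
  haveI : Finite (H ⧸ A) := Subgroup.finite_quotient_of_finiteIndex (H := A)
  set Z : Subgroup H := A ⊓ ⨅ q : H ⧸ A, Subgroup.centralizer {Quotient.out q} with hZ
  haveI hZfi : Z.FiniteIndex := by
    haveI : (⨅ q : H ⧸ A, Subgroup.centralizer {Quotient.out q}).FiniteIndex :=
      Subgroup.finiteIndex_iInf fun q => centralizer_finiteIndex_of_FC hFC _
    rw [hZ]
    infer_instance
  refine Subgroup.finiteIndex_of_le (H := Z) ?_
  intro z hz
  have hzA : z ∈ A := hz.1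
  have hzC : z ∈ ⨅ q : H ⧸ A, Subgroup.centralizer {Quotient.out q} := hz.2
  rw [Subgroup.mem_iInf] at hzC
  rw [Subgroup.mem_center_iff]
  intro h
  set q : H ⧸ A := QuotientGroup.mk h with hq
  set t : H := Quotient.out q with ht
  have hmk : (QuotientGroup.mk t : H ⧸ A) = QuotientGroup.mk h := QuotientGroup.out_eq' q
  have hta : t⁻¹ * h ∈ A := QuotientGroup.eq.mp hmk
  have hzt : t * z = z * t := by
    have := hzC q
    rw [Subgroup.mem_centralizer_iff] at this
    exact this t rfl
  have hza : (t⁻¹ * h) * z = z * (t⁻¹ * h) := hcomm _ hta _ hzA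
  have hht : h = t * (t⁻¹ * h) := by group
  calc h * z = t * ((t⁻¹ * h) * z) := by rw [hht]; group
    _ = t * (z * (t⁻¹ * h)) := by rw [hza]
    _ = (t * z) * (t⁻¹ * h) := by group
    _ = (z * t) * (t⁻¹ * h) := by rw [hzt]
    _ = z * h := by group

/-- If the center has finite index, the commutator set is finite. -/
lemma finite_commutatorSet_of_center_finiteIndex
    [(Subgroup.center H).FiniteIndex] : Finite (commutatorSet H) := by
  haveI : Finite (H ⧸ Subgroup.center H) :=
    Subgroup.finite_quotient_of_finiteIndex (H := Subgroup.center H)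
  apply Set.Finite.to_subtype
  have hsub : commutatorSet H ⊆ Set.range
      (fun p : (H ⧸ Subgroup.center H) × (H ⧸ Subgroup.center H) =>
        ⁅Quotient.out p.1, Quotient.out p.2⁆) := by
    rintro _ ⟨g₁, g₂, rfl⟩
    refine ⟨(QuotientGroup.mk g₁, QuotientGroup.mk g₂), ?_⟩
    set t₁ := Quotient.out (QuotientGroup.mk g₁ : H ⧸ Subgroup.center H) with ht₁
    set t₂ := Quotient.out (QuotientGroup.mk g₂ : H ⧸ Subgroup.center H) with ht₂
    have h₁ : g₁⁻¹ * t₁ ∈ Subgroup.center H :=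
      QuotientGroup.eq.mp (QuotientGroup.out_eq' _).symm
    have h₂ : g₂⁻¹ * t₂ ∈ Subgroup.center H :=
      QuotientGroup.eq.mp (QuotientGroup.out_eq' _).symm
    have e₁ : t₁ = g₁ * (g₁⁻¹ * t₁) := by group
    have e₂ : t₂ = g₂ * (g₂⁻¹ * t₂) := by group
    show ⁅t₁, t₂⁆ = ⁅g₁, g₂⁆
    rw [e₁, e₂, comm_central h₁ h₂]
  exact (Set.finite_range _).subset hsub

end Aux

theorem stmt_2 {G : Type*} [Group G]
    (hFC : ∀ x : G, (Set.range fun h : G => h * x * h⁻¹).Finite)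
    (N : Subgroup G) [N.Normal] [N.FiniteIndex]
    [((Subgroup.map N.subtype (commutator ↥N)).subgroupOf (commutator G)).Normal] :
    Group.FG
      (↥(commutator G) ⧸ ((Subgroup.map N.subtype (commutator ↥N)).subgroupOf (commutator G))) := by
  have hK : Subgroup.map N.subtype (commutator ↥N) = ⁅N, N⁆ := by
    rw [commutator_def, Subgroup.map_commutator, ← MonoidHom.range_eq_map, N.range_subtype]
  set K : Subgroup G := ⁅N, N⁆ with hKdef
  haveI hKnorm : K.Normal := Subgroup.commutator_normal N N
  set H := G ⧸ K with hH
  set π : G →* H := QuotientGroup.mk' K with hπdef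
  have hπ : Function.Surjective π := QuotientGroup.mk'_surjective K
  have hkerπ : π.ker = K := QuotientGroup.ker_mk' K
  -- H is FC
  have hFCH : ∀ y : H, (Set.range fun h : H => h * y * h⁻¹).Finite := by
    intro y
    obtain ⟨x, rfl⟩ := hπ y
    have hsub : (Set.range fun h : H => h * π x * h⁻¹) ⊆
        π '' (Set.range fun h : G => h * x * h⁻¹) := by
      rintro _ ⟨h, rfl⟩
      obtain ⟨g, rfl⟩ := hπ h
      exact ⟨g * x * g⁻¹, ⟨g, rfl⟩, by simp [map_mul]⟩
    exact ((hFC x).image π).subset hsub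
  -- A is abelian of finite index
  set A : Subgroup H := N.map π with hA
  haveI : A.FiniteIndex := by
    have h1 : A.index = N.index :=
      Subgroup.index_map_eq N hπ (hkerπ.le.trans (Subgroup.commutator_le_left N N))
    exact ⟨h1.trans_ne Subgroup.FiniteIndex.index_ne_zero⟩
  have hcomm : ∀ a ∈ A, ∀ b ∈ A, a * b = b * a := by
    rintro _ ⟨n, hn, rfl⟩ _ ⟨m, hm, rfl⟩
    have h1 : ⁅n, m⁆ ∈ π.ker := hkerπ.symm ▸ Subgroup.commutator_mem_commutator hn hm
    rw [MonoidHom.mem_ker] at h1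
    have h2 : ⁅π n, π m⁆ = 1 := by rw [← map_commutatorElement, h1]
    rw [commutatorElement_eq_one_iff_mul_comm] at h2
    exact h2
  haveI : (Subgroup.center H).FiniteIndex := center_finiteIndex_aux hFCH A hcomm
  haveI : Finite (commutatorSet H) := finite_commutatorSet_of_center_finiteIndex
  haveI : Finite (commutator H) := inferInstance
  -- the restriction of π to commutator subgroups
  have hle : (commutator G).map π ≤ commutator H := by
    rw [commutator_def, commutator_def, Subgroup.map_commutator]
    exact Subgroup.commutator_mono le_top le_top
  set ψ : ↥(commutator G) →* ↥(commutator H) :=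
    (Subgroup.inclusion hle).comp (π.subgroupMap (commutator G)) with hψ
  have hker : ψ.ker = K.subgroupOf (commutator G) := by
    ext x
    have hval : ((ψ x : ↥(commutator H)) : H) = π (x : G) := rfl
    constructor
    · intro h
      have h1 : π (x : G) = 1 := by rw [← hval, h]; rfl
      have h2 : (x : G) ∈ π.ker := h1
      rw [hkerπ] at h2
      exact h2
    · intro h
      have h2 : (x : G) ∈ π.ker := by rw [hkerπ]; exact h
      have h1 : π (x : G) = 1 := h2
      exact Subtype.ext (hval.trans h1)
  have hSeq : (Subgroup.map N.subtype (commutator ↥N)).subgroupOf (commutator G) = ψ.ker := by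
    rw [hK, hker]
  haveI : Finite
      (↥(commutator G) ⧸ (Subgroup.map N.subtype (commutator ↥N)).subgroupOf (commutator G)) := by
    rw [hSeq]
    exact Finite.of_injective (QuotientGroup.kerLift ψ) (QuotientGroup.kerLift_injective ψ)
  infer_instance
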